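/- Let q be an odd prime power, η the quadratic character of F_q, and β ∈ F_q*. If ε ∈ {1,-1} satisfies ε·η(-β) = 1, then ∑_{θ ∈ F_q*, η(θ)=ε} η(θ - β) = -ε. -/

import Mathlib

open Finset

lemma aux_sum (F : Type*) [Field F] [Fintype F] [DecidableEq F]
    (hq : ringChar F ≠ 2) {β : F} (hβ : β ≠ 0) :
    ∑ θ : F, quadraticChar F θ * quadraticChar F (θ - β) = -1 := by
  classical
  have h0 : ∑ θ : F, quadraticChar F θ * quadraticChar F (θ - β)
      = ∑ θ ∈ Finset.univ.filter (fun θ : F => θ ≠ 0),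
          quadraticChar F (1 - β * θ⁻¹) := by
    rw [Finset.sum_filter]
    refine Finset.sum_congr rfl fun θ _ => ?_
    by_cases h : θ = 0
    · simp [h]
    · simp only [h, if_neg, if_true, ne_eq, not_false_eq_true, if_pos]
      rw [show θ - β = θ * (1 - β * θ⁻¹) by field_simp, map_mul, ← mul_assoc,
        ← sq, quadraticChar_sq_one h, one_mul]
  rw [h0]
  have h1 : ∑ θ ∈ Finset.univ.filter (fun θ : F => θ ≠ 0),
      quadraticChar F (1 - β * θ⁻¹)
      = ∑ v ∈ Finset.univ.filter (fun v : F => v ≠ 1), quadraticChar F v := by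
    refine Finset.sum_nbij' (fun θ => 1 - β * θ⁻¹) (fun v => β * (1 - v)⁻¹)
      ?_ ?_ ?_ ?_ ?_
    · intro θ hθ
      simp only [mem_filter, mem_univ, true_and] at hθ ⊢
      intro hc
      have : β * θ⁻¹ = 0 := by linear_combination -hc
      rcases mul_eq_zero.mp this with h | h
      · exact hβ h
      · exact hθ (inv_eq_zero.mp h)
    · intro v hv
      simp only [mem_filter, mem_univ, true_and] at hv ⊢
      have h1v : (1 : F) - v ≠ 0 := sub_ne_zero.mpr (Ne.symm hv)
      exact mul_ne_zero hβ (inv_ne_zero h1v)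
    · intro θ hθ
      simp only [mem_filter, mem_univ, true_and] at hθ
      field_simp
      rw [sub_sub_cancel, div_self hβ]
    · intro v hv
      simp only [mem_filter, mem_univ, true_and] at hv
      have h1v : (1 : F) - v ≠ 0 := sub_ne_zero.mpr (Ne.symm hv)
      field_simp
      ring
    · intro θ _; rfl
  rw [h1]
  have h2 : Finset.univ.filter (fun v : F => v ≠ 1) = Finset.univ.erase 1 := by
    ext v; simp [Finset.mem_erase]
  rw [h2, Finset.sum_erase_eq_sub (Finset.mem_univ 1), quadraticChar_sum_zero hq,
    map_one]
  ring

/-- For an odd prime power `q`, `β ∈ F_q*`, and `ε ∈ {1,-1}` with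
`ε·η(-β) = 1`, we have `∑_{θ ∈ F_q*, η(θ)=ε} η(θ - β) = -ε`. -/
theorem stmt_1 (F : Type*) [Field F] [Fintype F] [DecidableEq F]
    (hq : ringChar F ≠ 2) (β : F) (hβ : β ≠ 0) (ε : ℤ)
    (hε : ε = 1 ∨ ε = -1) (h : ε * quadraticChar F (-β) = 1) :
    ∑ θ ∈ Finset.univ.filter (fun θ : F => θ ≠ 0 ∧ quadraticChar F θ = ε),
      quadraticChar F (θ - β) = -ε := by
  classical
  set η := quadraticChar F
  have hεη : η (-β) = ε := by
    rcases hε with rfl | rfl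
    · linarith
    · linarith
  -- sum over all θ of η(θ-β) is 0
  have hshift : ∑ θ : F, η (θ - β) = 0 := by
    rw [← quadraticChar_sum_zero hq]
    exact Fintype.sum_equiv (Equiv.subRight β) _ _ (fun θ => rfl)
  have hA : ∑ θ ∈ Finset.univ.filter (fun θ : F => θ ≠ 0), η (θ - β) = -ε := by
    have : ∑ θ : F, η (θ - β)
        = η (0 - β) + ∑ θ ∈ Finset.univ.filter (fun θ : F => θ ≠ 0), η (θ - β) := by
      rw [Finset.filter_ne', Finset.sum_erase_eq_sub (Finset.mem_univ 0)]
      ring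
    rw [hshift] at this
    rw [zero_sub, hεη] at this
    linarith
  have hB := aux_sum F hq hβ
  -- split the nonzero sum according to η θ = ε
  have hsplit : ∑ θ ∈ Finset.univ.filter (fun θ : F => θ ≠ 0),
      (1 + ε * η θ) * η (θ - β)
      = 2 * ∑ θ ∈ Finset.univ.filter (fun θ : F => θ ≠ 0 ∧ η θ = ε),
          η (θ - β) := by
    rw [← Finset.sum_filter_add_sum_filter_not
      (Finset.univ.filter (fun θ : F => θ ≠ 0)) (fun θ => η θ = ε)]
    have e1 : (Finset.univ.filter (fun θ : F => θ ≠ 0)).filter (fun θ => η θ = ε)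
        = Finset.univ.filter (fun θ : F => θ ≠ 0 ∧ η θ = ε) := by
      rw [Finset.filter_filter]
    have t1 : ∑ θ ∈ (Finset.univ.filter (fun θ : F => θ ≠ 0)).filter
        (fun θ => η θ = ε), (1 + ε * η θ) * η (θ - β)
        = ∑ θ ∈ Finset.univ.filter (fun θ : F => θ ≠ 0 ∧ η θ = ε),
            2 * η (θ - β) := by
      rw [e1]
      refine Finset.sum_congr rfl fun θ hθ => ?_
      simp only [mem_filter, mem_univ, true_and] at hθ
      rw [hθ.2]
      rcases hε with rfl | rfl <;> ring
    have t2 : ∑ θ ∈ (Finset.univ.filter (fun θ : F => θ ≠ 0)).filter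
        (fun θ => ¬ η θ = ε), (1 + ε * η θ) * η (θ - β) = 0 := by
      refine Finset.sum_eq_zero fun θ hθ => ?_
      simp only [mem_filter, mem_univ, true_and] at hθ
      have hd := quadraticChar_dichotomy (F := F) hθ.1
      have hηθ : η θ = -ε := by
        rcases hε with rfl | rfl
        · rcases hd with h' | h'
          · exact absurd h' hθ.2
          · exact h'
        · rcases hd with h' | h'
          · rw [neg_neg]; exact h'
          · exact absurd h' hθ.2
      rw [hηθ]
      rcases hε with rfl | rfl <;> ring
    rw [t1, t2, add_zero, Finset.mul_sum]
  -- expand the left side of hsplit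
  have hexp : ∑ θ ∈ Finset.univ.filter (fun θ : F => θ ≠ 0),
      (1 + ε * η θ) * η (θ - β)
      = (∑ θ ∈ Finset.univ.filter (fun θ : F => θ ≠ 0), η (θ - β))
        + ε * ∑ θ ∈ Finset.univ.filter (fun θ : F => θ ≠ 0), η θ * η (θ - β) := by
    rw [Finset.mul_sum, ← Finset.sum_add_distrib]
    refine Finset.sum_congr rfl fun θ _ => ?_
    ring
  have hB' : ∑ θ ∈ Finset.univ.filter (fun θ : F => θ ≠ 0), η θ * η (θ - β) = -1 := by
    rw [← hB]
    rw [Finset.sum_filter]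
    refine Finset.sum_congr rfl fun θ _ => ?_
    by_cases h' : θ = 0 <;> simp [h', η]
  rw [hexp, hA, hB'] at hsplit
  have : 2 * ∑ θ ∈ Finset.univ.filter (fun θ : F => θ ≠ 0 ∧ η θ = ε),
      η (θ - β) = 2 * (-ε) := by
    rw [← hsplit]; ring
  linarith
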